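/- Suppose ε < 1/2. Then for every n ∈ ℕ the boundaries do not cross: U_n > L_n. -/

import Mathlib

open MeasureTheory ProbabilityTheory Filter Asymptotics
open scoped ENNReal

namespace SeqMC

variable {Ω : Type*} [MeasurableSpace Ω]

/-- Partial sums: `S n = X_1 + ⋯ + X_n`, where the i-th variable `X_i` is `X (i-1)`. -/
def S (X : ℕ → Ω → ℕ) (n : ℕ) (ω : Ω) : ℕ := ∑ i ∈ Finset.range n, X i ω

/-- `X` is an i.i.d. Bernoulli(p) sequence under the probability measure `P`. -/
structure IsBernoulliSeq (P : Measure Ω) (p : ℝ) (X : ℕ → Ω → ℕ) : Prop where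
  isProb : IsProbabilityMeasure P
  meas : ∀ i, Measurable (X i)
  bdd : ∀ i ω, X i ω ≤ 1
  indep : iIndepFun X P
  bern : ∀ i, P (X i ⁻¹' {1}) = ENNReal.ofReal p

/-- The walk stayed strictly between the boundaries at all steps `1 ≤ k ≤ n`, i.e. `τ > n`. -/
def notStopped (X : ℕ → Ω → ℕ) (U L : ℕ → ℤ) (n : ℕ) (ω : Ω) : Prop :=
  ∀ k, 1 ≤ k → k ≤ n → L k < (S X k ω : ℤ) ∧ (S X k ω : ℤ) < U k

/-- The event `τ ≤ n` and `S_τ ≥ U_τ`. -/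
def hitUpperBy (X : ℕ → Ω → ℕ) (U L : ℕ → ℤ) (n : ℕ) (ω : Ω) : Prop :=
  ∃ k, 1 ≤ k ∧ k ≤ n ∧ notStopped X U L (k - 1) ω ∧ U k ≤ (S X k ω : ℤ)

/-- The event `τ ≤ n` and `S_τ ≤ L_τ`. -/
def hitLowerBy (X : ℕ → Ω → ℕ) (U L : ℕ → ℤ) (n : ℕ) (ω : Ω) : Prop :=
  ∃ k, 1 ≤ k ∧ k ≤ n ∧ notStopped X U L (k - 1) ω ∧ (S X k ω : ℤ) ≤ L k

/-- The recursively defined boundaries `(U_n, L_n)`: `U_1 = 2`, `L_1 = -1` and for `n ≥ 2`,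
`U_n` is the least `j ∈ {1,2,…}` with `P_α(τ ≥ n, S_n ≥ j) + P_α(τ < n, S_τ ≥ U_τ) ≤ ε_n`,
`L_n` is the greatest `j ∈ ℤ` with `P_α(τ ≥ n, S_n ≤ j) + P_α(τ < n, S_τ ≤ L_τ) ≤ ε_n`.
Here `Pα` is the measure `P_α` and `εs` the spending sequence. -/
noncomputable def bnd (Pα : Measure Ω) (X : ℕ → Ω → ℕ) (εs : ℕ → ℝ) : ℕ → ℤ × ℤ
  | 0 => (2, -1)
  | 1 => (2, -1)
  | n + 2 =>
      let U : ℕ → ℤ := fun k => if h : k < n + 2 then (bnd Pα X εs k).1 else 0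
      let L : ℕ → ℤ := fun k => if h : k < n + 2 then (bnd Pα X εs k).2 else 0
      (sInf {j : ℤ | 1 ≤ j ∧
          Pα {ω | notStopped X U L (n + 1) ω ∧ j ≤ (S X (n + 2) ω : ℤ)} +
            Pα {ω | hitUpperBy X U L (n + 1) ω} ≤ ENNReal.ofReal (εs (n + 2))},
       sSup {j : ℤ |
          Pα {ω | notStopped X U L (n + 1) ω ∧ (S X (n + 2) ω : ℤ) ≤ j} +
            Pα {ω | hitLowerBy X U L (n + 1) ω} ≤ ENNReal.ofReal (εs (n + 2))})
  termination_by n => n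
  decreasing_by all_goals omega

/-- The upper boundary `U_n`. -/
noncomputable def Ub (Pα : Measure Ω) (X : ℕ → Ω → ℕ) (εs : ℕ → ℝ) (n : ℕ) : ℤ :=
  (bnd Pα X εs n).1

/-- The lower boundary `L_n`. -/
noncomputable def Lb (Pα : Measure Ω) (X : ℕ → Ω → ℕ) (εs : ℕ → ℝ) (n : ℕ) : ℤ :=
  (bnd Pα X εs n).2

/-- The stopping time `τ = inf {k ≥ 1 : S_k ≥ U_k or S_k ≤ L_k}`, with `0` encoding `τ = ∞`. -/
noncomputable def tau (Pα : Measure Ω) (X : ℕ → Ω → ℕ) (εs : ℕ → ℝ) (ω : Ω) : ℕ :=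
  sInf {k | 1 ≤ k ∧ ((S X k ω : ℤ) ≤ Lb Pα X εs k ∨ Ub Pα X εs k ≤ (S X k ω : ℤ))}

/-- `τ` as an extended nonneg real (`∞` when the algorithm never stops). -/
noncomputable def tauE (Pα : Measure Ω) (X : ℕ → Ω → ℕ) (εs : ℕ → ℝ) (ω : Ω) : ℝ≥0∞ :=
  if tau Pα X εs ω = 0 then ⊤ else (tau Pα X εs ω : ℝ≥0∞)

/-- The event `τ < ∞` and `S_τ ≥ U_τ`. -/
def hitsUpper (Pα : Measure Ω) (X : ℕ → Ω → ℕ) (εs : ℕ → ℝ) (ω : Ω) : Prop :=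
  tau Pα X εs ω ≠ 0 ∧ Ub Pα X εs (tau Pα X εs ω) ≤ (S X (tau Pα X εs ω) ω : ℤ)

/-- The event `τ < ∞` and `S_τ ≤ L_τ`. -/
def hitsLower (Pα : Measure Ω) (X : ℕ → Ω → ℕ) (εs : ℕ → ℝ) (ω : Ω) : Prop :=
  tau Pα X εs ω ≠ 0 ∧ (S X (tau Pα X εs ω) ω : ℤ) ≤ Lb Pα X εs (tau Pα X εs ω)

/-- The estimator `p̂ = S_τ/τ` (`= α` if `τ = ∞`). -/
noncomputable def phat (Pα : Measure Ω) (X : ℕ → Ω → ℕ) (εs : ℕ → ℝ) (α : ℝ) (ω : Ω) : ℝ :=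
  if tau Pα X εs ω = 0 then α
  else (S X (tau Pα X εs ω) ω : ℝ) / (tau Pα X εs ω)

/-! ### Auxiliary lemmas -/

lemma S_le_n {X : ℕ → Ω → ℕ} (hX : ∀ i ω, X i ω ≤ 1) (n : ℕ) (ω : Ω) : S X n ω ≤ n := by
  calc S X n ω ≤ ∑ _i ∈ Finset.range n, 1 := Finset.sum_le_sum fun i _ => hX i ω
  _ = n := by simp

lemma notStopped_congr {X : ℕ → Ω → ℕ} {U L U' L' : ℕ → ℤ} {n : ℕ} {ω : Ω}
    (hU : ∀ k, 1 ≤ k → k ≤ n → U k = U' k) (hL : ∀ k, 1 ≤ k → k ≤ n → L k = L' k) :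
    notStopped X U L n ω ↔ notStopped X U' L' n ω := by
  constructor
  · intro h k h1 h2
    rw [← hU k h1 h2, ← hL k h1 h2]; exact h k h1 h2
  · intro h k h1 h2
    rw [hU k h1 h2, hL k h1 h2]; exact h k h1 h2

lemma hitUpperBy_congr {X : ℕ → Ω → ℕ} {U L U' L' : ℕ → ℤ} {n : ℕ} {ω : Ω}
    (hU : ∀ k, 1 ≤ k → k ≤ n → U k = U' k) (hL : ∀ k, 1 ≤ k → k ≤ n → L k = L' k) :
    hitUpperBy X U L n ω ↔ hitUpperBy X U' L' n ω := by
  refine exists_congr fun k => ?_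
  constructor
  · rintro ⟨h1, h2, h3, h4⟩
    exact ⟨h1, h2, (notStopped_congr (fun m hm1 hm2 => hU m hm1 (hm2.trans ((Nat.sub_le k 1).trans h2)))
      (fun m hm1 hm2 => hL m hm1 (hm2.trans ((Nat.sub_le k 1).trans h2)))).mp h3, hU k h1 h2 ▸ h4⟩
  · rintro ⟨h1, h2, h3, h4⟩
    exact ⟨h1, h2, (notStopped_congr (fun m hm1 hm2 => hU m hm1 (hm2.trans ((Nat.sub_le k 1).trans h2)))
      (fun m hm1 hm2 => hL m hm1 (hm2.trans ((Nat.sub_le k 1).trans h2)))).mpr h3, (hU k h1 h2) ▸ h4⟩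

lemma hitLowerBy_congr {X : ℕ → Ω → ℕ} {U L U' L' : ℕ → ℤ} {n : ℕ} {ω : Ω}
    (hU : ∀ k, 1 ≤ k → k ≤ n → U k = U' k) (hL : ∀ k, 1 ≤ k → k ≤ n → L k = L' k) :
    hitLowerBy X U L n ω ↔ hitLowerBy X U' L' n ω := by
  refine exists_congr fun k => ?_
  constructor
  · rintro ⟨h1, h2, h3, h4⟩
    exact ⟨h1, h2, (notStopped_congr (fun m hm1 hm2 => hU m hm1 (hm2.trans ((Nat.sub_le k 1).trans h2)))
      (fun m hm1 hm2 => hL m hm1 (hm2.trans ((Nat.sub_le k 1).trans h2)))).mp h3, hL k h1 h2 ▸ h4⟩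
  · rintro ⟨h1, h2, h3, h4⟩
    exact ⟨h1, h2, (notStopped_congr (fun m hm1 hm2 => hU m hm1 (hm2.trans ((Nat.sub_le k 1).trans h2)))
      (fun m hm1 hm2 => hL m hm1 (hm2.trans ((Nat.sub_le k 1).trans h2)))).mpr h3, (hL k h1 h2) ▸ h4⟩

/-- The defining set for `U_{n+2}`. -/
noncomputable def upSet (Pα : Measure Ω) (X : ℕ → Ω → ℕ) (εs : ℕ → ℝ) (n : ℕ) : Set ℤ :=
  {j : ℤ | 1 ≤ j ∧
    Pα {ω | notStopped X (Ub Pα X εs) (Lb Pα X εs) (n + 1) ω ∧ j ≤ (S X (n + 2) ω : ℤ)} +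
      Pα {ω | hitUpperBy X (Ub Pα X εs) (Lb Pα X εs) (n + 1) ω} ≤ ENNReal.ofReal (εs (n + 2))}

/-- The defining set for `L_{n+2}`. -/
noncomputable def loSet (Pα : Measure Ω) (X : ℕ → Ω → ℕ) (εs : ℕ → ℝ) (n : ℕ) : Set ℤ :=
  {j : ℤ |
    Pα {ω | notStopped X (Ub Pα X εs) (Lb Pα X εs) (n + 1) ω ∧ (S X (n + 2) ω : ℤ) ≤ j} +
      Pα {ω | hitLowerBy X (Ub Pα X εs) (Lb Pα X εs) (n + 1) ω} ≤ ENNReal.ofReal (εs (n + 2))}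

lemma Ub_succ_succ (Pα : Measure Ω) (X : ℕ → Ω → ℕ) (εs : ℕ → ℝ) (n : ℕ) :
    Ub Pα X εs (n + 2) = sInf (upSet Pα X εs n) ∧
    Lb Pα X εs (n + 2) = sSup (loSet Pα X εs n) := by
  have hU : ∀ k, 1 ≤ k → k ≤ n + 1 →
      (fun k => if h : k < n + 2 then (bnd Pα X εs k).1 else 0) k = Ub Pα X εs k := by
    intro k _ h2; simp only [Ub]; rw [dif_pos (by omega)]
  have hL : ∀ k, 1 ≤ k → k ≤ n + 1 →
      (fun k => if h : k < n + 2 then (bnd Pα X εs k).2 else 0) k = Lb Pα X εs k := by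
    intro k _ h2; simp only [Lb]; rw [dif_pos (by omega)]
  constructor
  · show (bnd Pα X εs (n + 2)).1 = _
    rw [bnd]
    simp only [upSet]
    congr 2
    ext j
    constructor
    · rintro ⟨h1, h2⟩
      refine ⟨h1, ?_⟩
      convert h2 using 3
      · ext ω
        simp only [Set.mem_setOf_eq]
        exact and_congr_left fun _ => (notStopped_congr hU hL).symm
      · ext ω
        exact (hitUpperBy_congr hU hL).symm
    · rintro ⟨h1, h2⟩
      refine ⟨h1, ?_⟩
      convert h2 using 3
      · ext ω
        simp only [Set.mem_setOf_eq]
        exact and_congr_left fun _ => (notStopped_congr hU hL)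
      · ext ω
        exact (hitUpperBy_congr hU hL)
  · show (bnd Pα X εs (n + 2)).2 = _
    rw [bnd]
    simp only [loSet]
    congr 2
    ext j
    constructor
    · intro h2
      convert h2 using 3
      · ext ω
        simp only [Set.mem_setOf_eq]
        exact and_congr_left fun _ => (notStopped_congr hU hL).symm
      · ext ω
        exact (hitLowerBy_congr hU hL).symm
    · intro h2
      convert h2 using 3
      · ext ω
        simp only [Set.mem_setOf_eq]
        exact and_congr_left fun _ => (notStopped_congr hU hL)
      · ext ω
        exact (hitLowerBy_congr hU hL)

/-- Either the walk never stopped by time `n`, or it hit the upper/lower boundary. -/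
lemma stopped_trichotomy (X : ℕ → Ω → ℕ) (U L : ℕ → ℤ) (n : ℕ) (ω : Ω) :
    notStopped X U L n ω ∨ hitUpperBy X U L n ω ∨ hitLowerBy X U L n ω := by
  induction n with
  | zero => left; intro k h1 h2; omega
  | succ n ih =>
    rcases ih with hns | hup | hlo
    · by_cases hstep : L (n + 1) < (S X (n + 1) ω : ℤ) ∧ (S X (n + 1) ω : ℤ) < U (n + 1)
      · left
        intro k h1 h2
        rcases Nat.lt_or_ge k (n + 1) with h | h
        · exact hns k h1 (by omega)
        · have : k = n + 1 := by omega
          subst this; exact hstep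
      · by_cases hup2 : U (n + 1) ≤ (S X (n + 1) ω : ℤ)
        · exact Or.inr (Or.inl ⟨n + 1, by omega, le_refl _, hns, hup2⟩)
        · refine Or.inr (Or.inr ⟨n + 1, by omega, le_refl _, hns, ?_⟩)
          push_neg at hstep hup2
          by_contra hc
          push_neg at hc
          exact absurd (hstep hc) (not_le.mpr hup2)
    · exact Or.inr (Or.inl (hup.imp fun k ⟨h1, h2, h3, h4⟩ => ⟨h1, h2.trans (Nat.le_succ n), h3, h4⟩))
    · exact Or.inr (Or.inr (hlo.imp fun k ⟨h1, h2, h3, h4⟩ => ⟨h1, h2.trans (Nat.le_succ n), h3, h4⟩))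

lemma loSet_downClosed (Pα : Measure Ω) (X : ℕ → Ω → ℕ) (εs : ℕ → ℝ) (n : ℕ)
    {j j' : ℤ} (hj : j ∈ loSet Pα X εs n) (hle : j' ≤ j) : j' ∈ loSet Pα X εs n := by
  refine le_trans (add_le_add (measure_mono ?_) le_rfl) hj
  intro ω ⟨h1, h2⟩
  exact ⟨h1, h2.trans hle⟩

/-- Main induction: the cumulative exit probabilities are controlled by the spending sequence. -/
lemma hit_prob_le (Pα : Measure Ω) (X : ℕ → Ω → ℕ) (εs : ℕ → ℝ)
    (hbdd : ∀ i ω, X i ω ≤ 1) (hmono : Monotone εs)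
    (hprob : IsProbabilityMeasure Pα) :
    ∀ n : ℕ,
      (Pα {ω | hitUpperBy X (Ub Pα X εs) (Lb Pα X εs) (n + 1) ω} ≤ ENNReal.ofReal (εs (n + 1)) ∧
       Pα {ω | hitLowerBy X (Ub Pα X εs) (Lb Pα X εs) (n + 1) ω} ≤ ENNReal.ofReal (εs (n + 1))) ∧
      ((n + 3 : ℤ) ∈ upSet Pα X εs n ∧ (-1 : ℤ) ∈ loSet Pα X εs n) ∧
      (Ub Pα X εs (n + 2) ∈ upSet Pα X εs n ∧ Lb Pα X εs (n + 2) ∈ loSet Pα X εs n) := by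
  intro n
  induction n with
  | zero =>
    have hup1 : {ω | hitUpperBy X (Ub Pα X εs) (Lb Pα X εs) 1 ω} = ∅ := by
      ext ω
      simp only [Set.mem_setOf_eq, Set.mem_empty_iff_false, iff_false]
      rintro ⟨k, h1, h2, _, h4⟩
      have hk : k = 1 := by omega
      subst hk
      have hS := S_le_n hbdd 1 ω
      have hU1 : Ub Pα X εs 1 = 2 := by show (bnd Pα X εs 1).1 = 2; rw [bnd]
      rw [hU1] at h4
      omega
    have hlo1 : {ω | hitLowerBy X (Ub Pα X εs) (Lb Pα X εs) 1 ω} = ∅ := by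
      ext ω
      simp only [Set.mem_setOf_eq, Set.mem_empty_iff_false, iff_false]
      rintro ⟨k, h1, h2, _, h4⟩
      have hk : k = 1 := by omega
      subst hk
      have hL1 : Lb Pα X εs 1 = -1 := by show (bnd Pα X εs 1).2 = -1; rw [bnd]
      rw [hL1] at h4
      omega
    have hQ1u : Pα {ω | hitUpperBy X (Ub Pα X εs) (Lb Pα X εs) 1 ω} ≤ ENNReal.ofReal (εs 1) := by
      rw [hup1, measure_empty]; exact zero_le
    have hQ1l : Pα {ω | hitLowerBy X (Ub Pα X εs) (Lb Pα X εs) 1 ω} ≤ ENNReal.ofReal (εs 1) := by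
      rw [hlo1, measure_empty]; exact zero_le
    have hne_up : (0 + 3 : ℤ) ∈ upSet Pα X εs 0 := by
      refine ⟨by norm_num, ?_⟩
      have h0 : {ω | notStopped X (Ub Pα X εs) (Lb Pα X εs) (0 + 1) ω ∧
          (0 + 3 : ℤ) ≤ (S X (0 + 2) ω : ℤ)} = ∅ := by
        ext ω
        simp only [Set.mem_setOf_eq, Set.mem_empty_iff_false, iff_false, not_and]
        intro _
        have hS := S_le_n hbdd (0 + 2) ω
        intro hc
        have hS' : (S X (0 + 2) ω : ℤ) ≤ 2 := by exact_mod_cast hS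
        omega
      rw [h0, measure_empty, zero_add]
      exact hQ1u.trans (ENNReal.ofReal_le_ofReal (hmono (by omega)))
    have hne_lo : (-1 : ℤ) ∈ loSet Pα X εs 0 := by
      have h0 : {ω | notStopped X (Ub Pα X εs) (Lb Pα X εs) (0 + 1) ω ∧
          (S X (0 + 2) ω : ℤ) ≤ (-1 : ℤ)} = ∅ := by
        ext ω
        simp only [Set.mem_setOf_eq, Set.mem_empty_iff_false, iff_false, not_and]
        intro _ hc
        omega
      simp only [loSet, Set.mem_setOf_eq]
      rw [h0, measure_empty, zero_add]
      exact hQ1l.trans (ENNReal.ofReal_le_ofReal (hmono (by omega)))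
    refine ⟨⟨hQ1u, hQ1l⟩, ⟨hne_up, hne_lo⟩, ?_, ?_⟩
    · rw [(Ub_succ_succ Pα X εs 0).1]
      exact Int.csInf_mem ⟨_, hne_up⟩ ⟨1, fun j hj => hj.1⟩
    · rw [(Ub_succ_succ Pα X εs 0).2]
      by_cases hb : BddAbove (loSet Pα X εs 0)
      · exact Int.csSup_mem ⟨_, hne_lo⟩ hb
      · obtain ⟨j', hj', hlt⟩ := (not_bddAbove_iff.mp hb) (sSup (loSet Pα X εs 0))
        exact loSet_downClosed Pα X εs 0 hj' hlt.le
  | succ n ih =>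
    obtain ⟨_, _, hUmem, hLmem⟩ := ih
    -- step: control the exit probability by time n+2
    have hsub_up : {ω | hitUpperBy X (Ub Pα X εs) (Lb Pα X εs) (n + 2) ω} ⊆
        {ω | notStopped X (Ub Pα X εs) (Lb Pα X εs) (n + 1) ω ∧
          Ub Pα X εs (n + 2) ≤ (S X (n + 2) ω : ℤ)} ∪
        {ω | hitUpperBy X (Ub Pα X εs) (Lb Pα X εs) (n + 1) ω} := by
      rintro ω ⟨k, h1, h2, h3, h4⟩
      rcases Nat.lt_or_ge k (n + 2) with h | h
      · exact Or.inr ⟨k, h1, by omega, h3, h4⟩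
      · have hk : k = n + 2 := by omega
        subst hk
        exact Or.inl ⟨h3, h4⟩
    have hsub_lo : {ω | hitLowerBy X (Ub Pα X εs) (Lb Pα X εs) (n + 2) ω} ⊆
        {ω | notStopped X (Ub Pα X εs) (Lb Pα X εs) (n + 1) ω ∧
          (S X (n + 2) ω : ℤ) ≤ Lb Pα X εs (n + 2)} ∪
        {ω | hitLowerBy X (Ub Pα X εs) (Lb Pα X εs) (n + 1) ω} := by
      rintro ω ⟨k, h1, h2, h3, h4⟩
      rcases Nat.lt_or_ge k (n + 2) with h | h
      · exact Or.inr ⟨k, h1, by omega, h3, h4⟩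
      · have hk : k = n + 2 := by omega
        subst hk
        exact Or.inl ⟨h3, h4⟩
    have hQu : Pα {ω | hitUpperBy X (Ub Pα X εs) (Lb Pα X εs) (n + 2) ω} ≤
        ENNReal.ofReal (εs (n + 2)) :=
      le_trans (le_trans (measure_mono hsub_up) (measure_union_le _ _)) hUmem.2
    have hQl : Pα {ω | hitLowerBy X (Ub Pα X εs) (Lb Pα X εs) (n + 2) ω} ≤
        ENNReal.ofReal (εs (n + 2)) :=
      le_trans (le_trans (measure_mono hsub_lo) (measure_union_le _ _)) hLmem
    have hne_up : (n + 1 + 3 : ℤ) ∈ upSet Pα X εs (n + 1) := by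
      refine ⟨by omega, ?_⟩
      have h0 : {ω | notStopped X (Ub Pα X εs) (Lb Pα X εs) (n + 1 + 1) ω ∧
          (n + 1 + 3 : ℤ) ≤ (S X (n + 1 + 2) ω : ℤ)} = ∅ := by
        ext ω
        simp only [Set.mem_setOf_eq, Set.mem_empty_iff_false, iff_false, not_and]
        intro _ hc
        have hS := S_le_n hbdd (n + 3) ω
        have : (S X (n + 3) ω : ℤ) ≤ (n + 3 : ℤ) := by exact_mod_cast hS
        have he : n + 1 + 2 = n + 3 := by omega
        rw [he] at hc
        omega
      rw [show n + 1 + 2 = n + 3 from rfl] at h0 ⊢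
      rw [h0, measure_empty, zero_add]
      exact hQu.trans (ENNReal.ofReal_le_ofReal (hmono (by omega)))
    have hne_lo : (-1 : ℤ) ∈ loSet Pα X εs (n + 1) := by
      have h0 : {ω | notStopped X (Ub Pα X εs) (Lb Pα X εs) (n + 1 + 1) ω ∧
          (S X (n + 1 + 2) ω : ℤ) ≤ (-1 : ℤ)} = ∅ := by
        ext ω
        simp only [Set.mem_setOf_eq, Set.mem_empty_iff_false, iff_false, not_and]
        intro _ hc
        omega
      simp only [loSet, Set.mem_setOf_eq]
      rw [h0, measure_empty, zero_add]
      exact hQl.trans (ENNReal.ofReal_le_ofReal (hmono (by omega)))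
    refine ⟨⟨hQu, hQl⟩, ⟨hne_up, hne_lo⟩, ?_, ?_⟩
    · rw [(Ub_succ_succ Pα X εs (n + 1)).1]
      exact Int.csInf_mem ⟨_, hne_up⟩ ⟨1, fun j hj => hj.1⟩
    · rw [(Ub_succ_succ Pα X εs (n + 1)).2]
      by_cases hb : BddAbove (loSet Pα X εs (n + 1))
      · exact Int.csSup_mem ⟨_, hne_lo⟩ hb
      · obtain ⟨j', hj', hlt⟩ := (not_bddAbove_iff.mp hb) (sSup (loSet Pα X εs (n + 1)))
        exact loSet_downClosed Pα X εs (n + 1) hj' hlt.le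

theorem statement_9 {Ω : Type*} [MeasurableSpace Ω]
    (α ε : ℝ) (hα : α ∈ Set.Ioo (0:ℝ) 1) (hε : ε ∈ Set.Ioo (0:ℝ) 1)
    (εs : ℕ → ℝ) (hεs0 : εs 0 = 0) (hmono : Monotone εs)
    (hnonneg : ∀ n, 0 ≤ εs n) (hlt : ∀ n, εs n < ε)
    (hlim : Filter.Tendsto εs Filter.atTop (nhds ε))
    (P : ℝ → Measure Ω) (X : ℕ → Ω → ℕ)
    (hBern : ∀ p ∈ Set.Icc (0:ℝ) 1, IsBernoulliSeq (P p) p X)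
    (hεhalf : ε < 1 / 2) :
    ∀ n : ℕ, 1 ≤ n → Lb (P α) X εs n < Ub (P α) X εs n := by
  have hB := hBern α ⟨hα.1.le, hα.2.le⟩
  have hprob : IsProbabilityMeasure (P α) := hB.isProb
  have hbdd : ∀ i ω, X i ω ≤ 1 := hB.bdd
  intro n hn
  match n, hn with
  | 1, _ => show (bnd (P α) X εs 1).2 < (bnd (P α) X εs 1).1; rw [bnd]; norm_num
  | (m + 2), _ =>
    by_contra hcon
    push_neg at hcon
    obtain ⟨_, _, hUmem, hLmem⟩ := hit_prob_le (P α) X εs hbdd hmono hprob m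
    set Uv := Ub (P α) X εs (m + 2) with hUv
    set Lv := Lb (P α) X εs (m + 2) with hLv
    -- covering of Ω by four events
    have hcover : (Set.univ : Set Ω) ⊆
        ({ω | notStopped X (Ub (P α) X εs) (Lb (P α) X εs) (m + 1) ω ∧
            Uv ≤ (S X (m + 2) ω : ℤ)} ∪
          {ω | hitUpperBy X (Ub (P α) X εs) (Lb (P α) X εs) (m + 1) ω}) ∪
        ({ω | notStopped X (Ub (P α) X εs) (Lb (P α) X εs) (m + 1) ω ∧
            (S X (m + 2) ω : ℤ) ≤ Lv} ∪
          {ω | hitLowerBy X (Ub (P α) X εs) (Lb (P α) X εs) (m + 1) ω}) := by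
      intro ω _
      rcases stopped_trichotomy X (Ub (P α) X εs) (Lb (P α) X εs) (m + 1) ω with hns | hup | hlo
      · by_cases h : Uv ≤ (S X (m + 2) ω : ℤ)
        · exact Or.inl (Or.inl ⟨hns, h⟩)
        · push_neg at h
          exact Or.inr (Or.inl ⟨hns, le_of_lt (lt_of_lt_of_le h hcon)⟩)
      · exact Or.inl (Or.inr hup)
      · exact Or.inr (Or.inr hlo)
    have h1 : (1 : ℝ≥0∞) = P α Set.univ := (measure_univ).symm
    have hle : P α Set.univ ≤ ENNReal.ofReal (εs (m + 2)) + ENNReal.ofReal (εs (m + 2)) := by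
      refine le_trans (measure_mono hcover) ?_
      refine le_trans (measure_union_le _ _) (add_le_add ?_ ?_)
      · exact le_trans (measure_union_le _ _) hUmem.2
      · exact le_trans (measure_union_le _ _) hLmem
    have hlt1 : ENNReal.ofReal (εs (m + 2)) + ENNReal.ofReal (εs (m + 2)) < 1 := by
      rw [← ENNReal.ofReal_add (hnonneg _) (hnonneg _)]
      rw [ENNReal.ofReal_lt_one]
      have := hlt (m + 2)
      linarith
    rw [← h1] at hle
    exact absurd (lt_of_le_of_lt hle hlt1) (lt_irrefl 1)

end SeqMC
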